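/- Let T be any linear operator on a finite-dimensional Haar span, and suppose goodness of a cube R is a random event independent of cubes strictly larger than R, with probability exactly 1/2 for every cube. Then (1/2)·𝔼 Σ_{ℓ(Q) ≥ ℓ(R)} (T h_Q, h_R)(f, h_Q)(g, h_R) = 𝔼 Σ_{ℓ(Q) ≥ ℓ(R), R good} (T h_Q, h_R)(f, h_Q)(g, h_R), where the expectation is over the random dyadic lattice. -/

import Mathlib

open scoped Classical in
/-- Exchange of expectation and sum over random finite families. -/
lemma exch_aux {Ω κ : Type*} [Fintype Ω] (w : Ω → ℝ) (A : Finset κ) (S : Ω → Finset κ)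
    (hS : ∀ ω, S ω ⊆ A) (c : κ → ℝ) :
    ∑ ω, w ω * ∑ x ∈ S ω, c x
      = ∑ x ∈ A, (∑ ω ∈ Finset.univ.filter (fun ω => x ∈ S ω), w ω) * c x := by
  have key : ∀ ω, w ω * ∑ x ∈ S ω, c x = ∑ x ∈ A, if x ∈ S ω then w ω * c x else 0 := by
    intro ω
    rw [Finset.mul_sum, ← Finset.sum_filter]
    congr 1
    ext x
    simp only [Finset.mem_filter]
    exact ⟨fun hx => ⟨hS ω hx, hx⟩, fun hx => hx.2⟩
  simp_rw [key]
  rw [Finset.sum_comm]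
  refine Finset.sum_congr rfl fun x _ => ?_
  rw [Finset.sum_mul, ← Finset.sum_filter]

open scoped Classical in
/-- the averaging/goodness identity.  `(Ω, w)` is the (finite) probability
space of random dyadic lattices, `D ω` the lattice, `G ω ⊆ D ω` its good cubes, `h Q` the
Haar function of the cube `Q`, `T` any linear operator, and
`t Q R = (T h_Q, h_R)(f, h_Q)(g, h_R)`.  Assuming (i) for every lattice the Haar
expansions reproduce `f` and `g` in the bilinear form of `T` (hypotheses `H1`, `H2`),
(ii) conditioned on `Q, R ∈ 𝒟(ω)` with `ℓ(Q) < ℓ(R)`, the event "`R` is good" has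
probability 1/2 (hypothesis `H4`), and (iii) each cube is good with conditional
probability exactly 1/2 (hypothesis `H3`), one has
`(1/2)·𝔼 Σ_{ℓ(Q) ≥ ℓ(R)} t Q R = 𝔼 Σ_{ℓ(Q) ≥ ℓ(R), R good} t Q R`. -/
theorem averaging_good_cubes {H ι Ω : Type*} [NormedAddCommGroup H]
    [InnerProductSpace ℝ H] [Fintype Ω] [DecidableEq ι]
    (w : Ω → ℝ) (hw0 : ∀ ω, 0 ≤ w ω) (hw1 : ∑ ω, w ω = 1)
    (D G : Ω → Finset ι) (hGD : ∀ ω, G ω ⊆ D ω)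
    (ℓ : ι → ℝ) (h : ι → H) (T : H →ₗ[ℝ] H) (f g : H)
    (t : ι → ι → ℝ)
    (ht : ∀ Q R, t Q R =
      (inner ℝ (T (h Q)) (h R) : ℝ) * (inner ℝ f (h Q) : ℝ) * (inner ℝ g (h R) : ℝ))
    (H1 : ∀ ω, ∀ R ∈ D ω,
      ∑ Q ∈ D ω, (inner ℝ (T (h Q)) (h R) : ℝ) * (inner ℝ f (h Q) : ℝ)
        = (inner ℝ (T f) (h R) : ℝ))
    (H2 : ∀ ω, ∑ R ∈ D ω, (inner ℝ (T f) (h R) : ℝ) * (inner ℝ g (h R) : ℝ)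
        = (inner ℝ (T f) g : ℝ))
    (H3 : ∀ R : ι,
      ∑ ω ∈ Finset.univ.filter (fun ω => R ∈ G ω), w ω
        = (1 / 2) * ∑ ω ∈ Finset.univ.filter (fun ω => R ∈ D ω), w ω)
    (H4 : ∀ Q R : ι, ℓ Q < ℓ R →
      ∑ ω ∈ Finset.univ.filter (fun ω => Q ∈ D ω ∧ R ∈ G ω), w ω
        = (1 / 2) * ∑ ω ∈ Finset.univ.filter (fun ω => Q ∈ D ω ∧ R ∈ D ω), w ω) :
    (1 / 2) * ∑ ω, w ω *
        ∑ Q ∈ D ω, ∑ R ∈ (D ω).filter (fun R => ℓ R ≤ ℓ Q), t Q R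
      = ∑ ω, w ω *
        ∑ Q ∈ D ω, ∑ R ∈ (G ω).filter (fun R => ℓ R ≤ ℓ Q), t Q R := by
  set A : Finset ι := Finset.univ.biUnion D with hAdef
  have hA : ∀ ω, D ω ⊆ A := fun ω => Finset.subset_biUnion_of_mem D (Finset.mem_univ ω)
  set s : ι → ℝ := fun R => (inner ℝ (T f) (h R) : ℝ) * (inner ℝ g (h R) : ℝ) with hs
  -- summing over Q reproduces s R
  have Bsum : ∀ ω, ∀ S : Finset ι, S ⊆ D ω →
      ∑ Q ∈ D ω, ∑ R ∈ S, t Q R = ∑ R ∈ S, s R := by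
    intro ω S hSD
    rw [Finset.sum_comm]
    refine Finset.sum_congr rfl fun R hR => ?_
    have : ∑ Q ∈ D ω, t Q R
        = (∑ Q ∈ D ω, (inner ℝ (T (h Q)) (h R) : ℝ) * (inner ℝ f (h Q) : ℝ))
            * (inner ℝ g (h R) : ℝ) := by
      rw [Finset.sum_mul]
      exact Finset.sum_congr rfl fun Q _ => ht Q R
    rw [this, H1 ω R (hSD hR)]
  -- pair-sum rewriting
  have pairsum : ∀ (S₁ S₂ : Finset ι),
      ∑ p ∈ (S₁ ×ˢ S₂).filter (fun p => ℓ p.1 < ℓ p.2), t p.1 p.2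
        = ∑ Q ∈ S₁, ∑ R ∈ S₂.filter (fun R => ℓ Q < ℓ R), t Q R := by
    intro S₁ S₂
    rw [Finset.sum_filter, Finset.sum_product]
    exact Finset.sum_congr rfl fun Q _ => (Finset.sum_filter _ _).symm
  set U : Ω → ℝ := fun ω =>
    ∑ p ∈ ((D ω) ×ˢ (D ω)).filter (fun p => ℓ p.1 < ℓ p.2), t p.1 p.2 with hU
  set V : Ω → ℝ := fun ω =>
    ∑ p ∈ ((D ω) ×ˢ (G ω)).filter (fun p => ℓ p.1 < ℓ p.2), t p.1 p.2 with hV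
  -- split the double sum
  have split : ∀ ω, ∀ S : Finset ι, S ⊆ D ω →
      ∑ Q ∈ D ω, ∑ R ∈ S.filter (fun R => ℓ R ≤ ℓ Q), t Q R
        = (∑ R ∈ S, s R)
          - ∑ p ∈ ((D ω) ×ˢ S).filter (fun p => ℓ p.1 < ℓ p.2), t p.1 p.2 := by
    intro ω S hSD
    rw [pairsum, ← Bsum ω S hSD, ← Finset.sum_sub_distrib]
    refine Finset.sum_congr rfl fun Q _ => ?_
    have := Finset.sum_filter_add_sum_filter_not S (fun R => ℓ R ≤ ℓ Q) (fun R => t Q R)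
    have hfilt : S.filter (fun R => ¬ ℓ R ≤ ℓ Q) = S.filter (fun R => ℓ Q < ℓ R) := by
      apply Finset.filter_congr; intro R _; simp [not_le]
    rw [hfilt] at this
    linarith
  -- expectation of full D-sum of s
  have ED : ∑ ω, w ω * ∑ R ∈ D ω, s R = (inner ℝ (T f) g : ℝ) := by
    have : ∀ ω, ∑ R ∈ D ω, s R = (inner ℝ (T f) g : ℝ) := fun ω => H2 ω
    simp_rw [this]
    rw [← Finset.sum_mul, hw1, one_mul]
  -- expectation of G-sum of s
  have EG : ∑ ω, w ω * ∑ R ∈ G ω, s R = (1 / 2) * (inner ℝ (T f) g : ℝ) := by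
    rw [exch_aux w A G (fun ω => (hGD ω).trans (hA ω)) s, ← ED,
      exch_aux w A D hA s, Finset.mul_sum]
    refine Finset.sum_congr rfl fun R _ => ?_
    have h3' : (∑ ω ∈ Finset.univ.filter (fun ω => R ∈ G ω), w ω) * s R
        = 1 / 2 * ((∑ ω ∈ Finset.univ.filter (fun ω => R ∈ D ω), w ω) * s R) := by
      rw [H3 R]; ring
    refine Eq.trans ?_ (h3'.trans ?_)
    · exact congrArg (· * s R)
        (Finset.sum_congr (by ext ω; simp) fun _ _ => rfl)
    · exact congrArg (fun x => 1 / 2 * (x * s R))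
        (Finset.sum_congr (by ext ω; simp) fun _ _ => rfl)
  -- expectation of V versus U
  have EV : ∑ ω, w ω * V ω = (1 / 2) * ∑ ω, w ω * U ω := by
    have hVsub : ∀ ω, ((D ω) ×ˢ (G ω)).filter (fun p => ℓ p.1 < ℓ p.2)
        ⊆ (A ×ˢ A).filter (fun p => ℓ p.1 < ℓ p.2) :=
      fun ω => Finset.filter_subset_filter _
        (Finset.product_subset_product (hA ω) ((hGD ω).trans (hA ω)))
    have hUsub : ∀ ω, ((D ω) ×ˢ (D ω)).filter (fun p => ℓ p.1 < ℓ p.2)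
        ⊆ (A ×ˢ A).filter (fun p => ℓ p.1 < ℓ p.2) :=
      fun ω => Finset.filter_subset_filter _
        (Finset.product_subset_product (hA ω) (hA ω))
    simp only [hU, hV]
    rw [exch_aux w _ _ hVsub (fun p => t p.1 p.2),
      exch_aux w _ _ hUsub (fun p => t p.1 p.2), Finset.mul_sum]
    refine Finset.sum_congr rfl fun p hp => ?_
    have hpl : ℓ p.1 < ℓ p.2 := (Finset.mem_filter.mp hp).2
    have h4' : (∑ ω ∈ Finset.univ.filter (fun ω => p.1 ∈ D ω ∧ p.2 ∈ G ω), w ω) * t p.1 p.2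
        = 1 / 2 * ((∑ ω ∈ Finset.univ.filter (fun ω => p.1 ∈ D ω ∧ p.2 ∈ D ω), w ω)
            * t p.1 p.2) := by
      rw [H4 p.1 p.2 hpl]; ring
    refine Eq.trans ?_ (h4'.trans ?_)
    · exact congrArg (· * t p.1 p.2)
        (Finset.sum_congr
          (by ext ω; simp [Finset.mem_filter, Finset.mem_product, hpl]) fun _ _ => rfl)
    · exact congrArg (fun x => 1 / 2 * (x * t p.1 p.2))
        (Finset.sum_congr
          (by ext ω; simp [Finset.mem_filter, Finset.mem_product, hpl]) fun _ _ => rfl)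
  -- put everything together
  have L1 : ∑ ω, w ω * ∑ Q ∈ D ω, ∑ R ∈ (D ω).filter (fun R => ℓ R ≤ ℓ Q), t Q R
      = (inner ℝ (T f) g : ℝ) - ∑ ω, w ω * U ω := by
    rw [← ED, ← Finset.sum_sub_distrib]
    refine Finset.sum_congr rfl fun ω _ => ?_
    rw [split ω (D ω) (le_refl _)]; ring
  have L2 : ∑ ω, w ω * ∑ Q ∈ D ω, ∑ R ∈ (G ω).filter (fun R => ℓ R ≤ ℓ Q), t Q R
      = (∑ ω, w ω * ∑ R ∈ G ω, s R) - ∑ ω, w ω * V ω := by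
    rw [← Finset.sum_sub_distrib]
    refine Finset.sum_congr rfl fun ω _ => ?_
    rw [split ω (G ω) (hGD ω)]; ring
  rw [L1, L2, EG, EV]; ring
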